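/- Let N ≥ 2 be an integer, let S, O_acc, t, T_0, μ, ΔT, μ_prev, d be real numbers, let σ > 0, and let η_1, …, η_N be i.i.d. real Gaussian random variables with mean d and variance σ²/2. Define e = O_acc + (1/(N−1)) Σ_{i=2}^{N} [(i−1)·|μ + ΔT − μ_prev| + (η_i − η_1)] − S·(t + T_0 + (N−1)(μ + ΔT) + (η_N − η_1)). Then e is Gaussian with mean μ_e = O_acc + (N/2)·|μ + ΔT − μ_prev| − S·(t + T_0 + (N−1)(μ + ΔT)) and variance σ_e² = (1/2)·((N − 2S)/(N−1) + 2S² − 2S)·σ². -/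

import Mathlib

open MeasureTheory ProbabilityTheory Real
open scoped NNReal ENNReal

lemma gaussianPDFReal_conv (m₁ m₂ : ℝ) (v₁ v₂ : ℝ≥0) (h₁ : v₁ ≠ 0) (h₂ : v₂ ≠ 0) (x : ℝ) :
    ∫ t, gaussianPDFReal m₁ v₁ t * gaussianPDFReal m₂ v₂ (x - t) =
      gaussianPDFReal (m₁ + m₂) (v₁ + v₂) x := by
  have ha : (0:ℝ) < v₁ := NNReal.coe_pos.mpr h₁.bot_lt
  have hb : (0:ℝ) < v₂ := NNReal.coe_pos.mpr h₂.bot_lt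
  set a : ℝ := (v₁ : ℝ) with ha'
  set b : ℝ := (v₂ : ℝ) with hb'
  have hab : (0:ℝ) < a + b := by linarith
  set k : ℝ := (a + b) / (2 * a * b) with hk
  have hkpos : 0 < k := by positivity
  set c : ℝ := (m₁ * b + (x - m₂) * a) / (a + b) with hc
  set r : ℝ := (x - m₁ - m₂) ^ 2 / (2 * (a + b)) with hr
  have hpt : ∀ t, gaussianPDFReal m₁ v₁ t * gaussianPDFReal m₂ v₂ (x - t)
      = ((√(2 * π * a))⁻¹ * (√(2 * π * b))⁻¹ * rexp (-r)) * rexp (-(k * (t - c) ^ 2)) := by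
    intro t
    have key : -(t - m₁) ^ 2 / (2 * a) + -(x - t - m₂) ^ 2 / (2 * b)
        = -r + -(k * (t - c) ^ 2) := by
      rw [hr, hk, hc]
      field_simp
      ring
    simp only [gaussianPDFReal, ← ha', ← hb']
    rw [mul_mul_mul_comm, ← Real.exp_add, key, Real.exp_add]
    ring
  rw [integral_congr_ae (Filter.Eventually.of_forall hpt), MeasureTheory.integral_const_mul]
  have hgauss : ∫ t, rexp (-(k * (t - c) ^ 2)) = √(π / k) := by
    have h' : ∫ t, rexp (-(k * (t - c) ^ 2)) = ∫ t, rexp (-(k * t ^ 2)) :=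
      integral_sub_right_eq_self (fun t => rexp (-(k * t ^ 2))) c
    rw [h']
    simp_rw [neg_mul_eq_neg_mul]
    exact integral_gaussian k
  rw [hgauss]
  have hconst : (√(2 * π * a))⁻¹ * (√(2 * π * b))⁻¹ * √(π / k)
      = (√(2 * π * (a + b)))⁻¹ := by
    rw [hk, ← Real.sqrt_inv, ← Real.sqrt_inv, ← Real.sqrt_inv,
      ← Real.sqrt_mul (by positivity), ← Real.sqrt_mul (by positivity)]
    congr 1
    have hπ := Real.pi_pos
    field_simp
  have hcast : ((v₁ + v₂ : ℝ≥0) : ℝ) = a + b := by push_cast; rfl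
  rw [gaussianPDFReal, hcast]
  rw [show (√(2 * π * a))⁻¹ * (√(2 * π * b))⁻¹ * rexp (-r) * √(π / k)
      = ((√(2 * π * a))⁻¹ * (√(2 * π * b))⁻¹ * √(π / k)) * rexp (-r) by ring, hconst]
  congr 1
  rw [hr]
  congr 1
  ring

lemma gaussianPDFReal_le (m : ℝ) (v : ℝ≥0) (y : ℝ) :
    gaussianPDFReal m v y ≤ (√(2 * π * v))⁻¹ := by
  rw [gaussianPDFReal]
  have h1 : rexp (-(y - m) ^ 2 / (2 * v)) ≤ 1 := by
    rw [Real.exp_le_one_iff]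
    rcases eq_or_ne v 0 with h | h
    · simp [h]
    · have : (0:ℝ) < v := NNReal.coe_pos.mpr h.bot_lt
      have := sq_nonneg (y - m)
      have h2 : (0:ℝ) < 2 * v := by linarith
      exact div_nonpos_of_nonpos_of_nonneg (by linarith) (le_of_lt h2)
  calc (√(2 * π * v))⁻¹ * rexp (-(y - m) ^ 2 / (2 * v))
      ≤ (√(2 * π * v))⁻¹ * 1 := by
        exact mul_le_mul_of_nonneg_left h1 (by positivity)
    _ = (√(2 * π * v))⁻¹ := mul_one _

lemma integrable_pdf_mul (m₁ m₂ : ℝ) (v₁ v₂ : ℝ≥0) (x : ℝ) :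
    Integrable (fun t => gaussianPDFReal m₁ v₁ t * gaussianPDFReal m₂ v₂ (x - t)) := by
  have h : (fun t => gaussianPDFReal m₁ v₁ t * gaussianPDFReal m₂ v₂ (x - t))
      = fun t => gaussianPDFReal m₂ v₂ (x - t) * gaussianPDFReal m₁ v₁ t := by
    funext t; ring
  rw [h]
  refine (integrable_gaussianPDFReal m₁ v₁).bdd_mul (c := (√(2 * π * v₂))⁻¹) ?_ ?_
  · exact ((measurable_gaussianPDFReal m₂ v₂).comp (measurable_const.sub measurable_id)).aestronglyMeasurable
  · refine Filter.Eventually.of_forall fun t => ?_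
    rw [Real.norm_eq_abs, abs_of_nonneg (gaussianPDFReal_nonneg _ _ _)]
    exact gaussianPDFReal_le _ _ _

lemma gaussian_prod_add_main (m₁ m₂ : ℝ) (v₁ v₂ : ℝ≥0) (h₁ : v₁ ≠ 0) (h₂ : v₂ ≠ 0) :
    Measure.map (fun p : ℝ × ℝ => p.1 + p.2)
        ((gaussianReal m₁ v₁).prod (gaussianReal m₂ v₂)) =
      gaussianReal (m₁ + m₂) (v₁ + v₂) := by
  have h12 : v₁ + v₂ ≠ 0 := fun h => h₁ (by simpa using (add_eq_zero.mp h).1)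
  have hfm : Measurable (gaussianPDF m₁ v₁) := measurable_gaussianPDF _ _
  have hgm : Measurable (gaussianPDF m₂ v₂) := measurable_gaussianPDF _ _
  ext s hs
  rw [Measure.map_apply measurable_add hs, Measure.prod_apply (measurable_add hs)]
  have hinner : ∀ t : ℝ,
      (gaussianReal m₂ v₂) (Prod.mk t ⁻¹' ((fun p : ℝ × ℝ => p.1 + p.2) ⁻¹' s))
      = ∫⁻ x in s, gaussianPDF m₂ v₂ (x - t) := by
    intro t
    have hset : (Prod.mk t ⁻¹' ((fun p : ℝ × ℝ => p.1 + p.2) ⁻¹' s))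
        = (fun y => t + y) ⁻¹' s := rfl
    have hms : MeasurableSet ((fun y => t + y) ⁻¹' s) :=
      (measurable_const_add t) hs
    rw [hset, gaussianReal_of_var_ne_zero _ h₂, withDensity_apply _ hms,
      ← lintegral_indicator hms]
    have hind : ∀ y, ((fun y => t + y) ⁻¹' s).indicator (gaussianPDF m₂ v₂) y
        = s.indicator (fun x => gaussianPDF m₂ v₂ (x - t)) (t + y) := by
      intro y
      by_cases hy : t + y ∈ s
      · simp [Set.indicator, hy, Set.mem_preimage]
      · simp [Set.indicator, hy, Set.mem_preimage]
    simp_rw [hind]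
    rw [lintegral_add_left_eq_self (s.indicator fun x => gaussianPDF m₂ v₂ (x - t)) t,
      lintegral_indicator hs]
  simp_rw [hinner]
  have hGm : Measurable fun q : ℝ × ℝ => gaussianPDF m₂ v₂ (q.2 - q.1) :=
    hgm.comp (measurable_snd.sub measurable_fst)
  have houter : Measurable fun t : ℝ => ∫⁻ x in s, gaussianPDF m₂ v₂ (x - t) := by
    exact (Measurable.lintegral_prod_right (f := fun t x => gaussianPDF m₂ v₂ (x - t)) hGm)
  rw [gaussianReal_of_var_ne_zero _ h₁,
    lintegral_withDensity_eq_lintegral_mul _ hfm houter]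
  simp only [Pi.mul_apply]
  have hswap : ∫⁻ t, gaussianPDF m₁ v₁ t * ∫⁻ x in s, gaussianPDF m₂ v₂ (x - t)
      = ∫⁻ x in s, ∫⁻ t, gaussianPDF m₁ v₁ t * gaussianPDF m₂ v₂ (x - t) := by
    have h1 : ∀ t, gaussianPDF m₁ v₁ t * ∫⁻ x in s, gaussianPDF m₂ v₂ (x - t)
        = ∫⁻ x in s, gaussianPDF m₁ v₁ t * gaussianPDF m₂ v₂ (x - t) := fun t =>
      (lintegral_const_mul _ (hgm.comp (measurable_id.sub measurable_const))).symm
    simp_rw [h1]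
    exact lintegral_lintegral_swap
      ((hfm.comp measurable_fst).mul
        (hgm.comp (measurable_snd.sub measurable_fst))).aemeasurable
  rw [hswap]
  have hpt : ∀ x, ∫⁻ t, gaussianPDF m₁ v₁ t * gaussianPDF m₂ v₂ (x - t)
      = gaussianPDF (m₁ + m₂) (v₁ + v₂) x := by
    intro x
    have hmul : ∀ t, gaussianPDF m₁ v₁ t * gaussianPDF m₂ v₂ (x - t)
        = ENNReal.ofReal (gaussianPDFReal m₁ v₁ t * gaussianPDFReal m₂ v₂ (x - t)) := by
      intro t
      rw [gaussianPDF, gaussianPDF,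
        ENNReal.ofReal_mul (gaussianPDFReal_nonneg _ _ _)]
    simp_rw [hmul]
    rw [← MeasureTheory.ofReal_integral_eq_lintegral_ofReal
        (integrable_pdf_mul m₁ m₂ v₁ v₂ x)
        (Filter.Eventually.of_forall fun t =>
          mul_nonneg (gaussianPDFReal_nonneg _ _ _) (gaussianPDFReal_nonneg _ _ _)),
      gaussianPDFReal_conv m₁ m₂ v₁ v₂ h₁ h₂ x, gaussianPDF]
  simp_rw [hpt]
  rw [gaussianReal_apply _ h12 s]

lemma gaussian_prod_add (m₁ m₂ : ℝ) (v₁ v₂ : ℝ≥0) :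
    Measure.map (fun p : ℝ × ℝ => p.1 + p.2)
        ((gaussianReal m₁ v₁).prod (gaussianReal m₂ v₂)) =
      gaussianReal (m₁ + m₂) (v₁ + v₂) := by
  by_cases h₁ : v₁ = 0
  · subst h₁
    rw [gaussianReal_zero_var, Measure.dirac_prod,
      Measure.map_map measurable_add measurable_prodMk_left]
    have : ((fun p : ℝ × ℝ => p.1 + p.2) ∘ Prod.mk m₁) = fun y => m₁ + y := rfl
    rw [this, gaussianReal_map_const_add, zero_add, add_comm m₂ m₁]
  by_cases h₂ : v₂ = 0
  · subst h₂
    rw [gaussianReal_zero_var, Measure.prod_dirac,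
      Measure.map_map measurable_add measurable_prodMk_right]
    have : ((fun p : ℝ × ℝ => p.1 + p.2) ∘ fun x => (x, m₂)) = fun y => y + m₂ := rfl
    rw [this, gaussianReal_map_add_const, add_zero]
  exact gaussian_prod_add_main m₁ m₂ v₁ v₂ h₁ h₂

lemma map_add_gaussian {Ω : Type*} [MeasurableSpace Ω] {P : Measure Ω} [IsProbabilityMeasure P]
    {X Y : Ω → ℝ} (hX : Measurable X) (hY : Measurable Y) (h : IndepFun X Y P)
    {m₁ m₂ : ℝ} {v₁ v₂ : ℝ≥0}
    (h1 : P.map X = gaussianReal m₁ v₁) (h2 : P.map Y = gaussianReal m₂ v₂) :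
    P.map (X + Y) = gaussianReal (m₁ + m₂) (v₁ + v₂) := by
  have hprod := (indepFun_iff_map_prod_eq_prod_map_map hX.aemeasurable hY.aemeasurable).mp h
  have hcomp : P.map (X + Y) = Measure.map (fun p : ℝ × ℝ => p.1 + p.2)
      (P.map (fun ω => (X ω, Y ω))) := by
    rw [Measure.map_map measurable_add (hX.prodMk hY)]
    rfl
  rw [hcomp, hprod, h1, h2]
  exact gaussian_prod_add m₁ m₂ v₁ v₂

lemma map_sum_gaussian {Ω : Type*} [MeasurableSpace Ω] (P : Measure Ω) [IsProbabilityMeasure P]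
    (X : ℕ → Ω → ℝ) (hm : ∀ i, Measurable (X i))
    (hi : iIndepFun X P)
    (m : ℕ → ℝ) (v : ℕ → ℝ≥0) (h : ∀ i, P.map (X i) = gaussianReal (m i) (v i))
    (s : Finset ℕ) :
    P.map (∑ i ∈ s, X i) = gaussianReal (∑ i ∈ s, m i) (∑ i ∈ s, v i) := by
  classical
  induction s using Finset.induction_on with
  | empty =>
      simp only [Finset.sum_empty]
      rw [show ((0 : Ω → ℝ)) = fun _ => (0 : ℝ) from rfl, Measure.map_const]
      simp [gaussianReal_zero_var]
  | @insert a s' ha ih =>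
      rw [Finset.sum_insert ha, Finset.sum_insert ha, Finset.sum_insert ha]
      have hind : IndepFun (X a) (∑ i ∈ s', X i) P :=
        (hi.indepFun_finset_sum_of_notMem hm ha).symm
      have hfun : (∑ i ∈ s', X i) = fun ω => ∑ i ∈ s', X i ω := by
        funext ω; simp [Finset.sum_apply]
      have hYm : Measurable (∑ i ∈ s', X i) := by
        rw [hfun]; exact Finset.measurable_sum s' fun i _ => hm i
      exact map_add_gaussian (hm a) hYm hind (h a) ih

lemma sum_Icc_cast_helper (N : ℕ) :
    ∑ i ∈ Finset.Icc 2 N, ((i : ℝ) - 1) = (N : ℝ) * ((N : ℝ) - 1) / 2 := by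
  induction N with
  | zero => simp
  | succ n ih =>
      rcases Nat.lt_or_ge n 1 with h | h
      · interval_cases n <;> simp
      · rw [Finset.sum_Icc_succ_top (by omega : 2 ≤ n + 1), ih]
        push_cast
        ring

theorem sota_first_batch_error_gaussian
    {Ω : Type*} [MeasurableSpace Ω] (P : Measure Ω) [IsProbabilityMeasure P]
    (N : ℕ) (hN : 2 ≤ N)
    (S Oacc t T₀ μ ΔT μprev d : ℝ) (σ : ℝ) (hσ : 0 < σ)
    (η : ℕ → Ω → ℝ) (hmeas : ∀ i, Measurable (η i))
    (hindep : iIndepFun η P)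
    (hgauss : ∀ i, Measure.map (η i) P = gaussianReal d (Real.toNNReal (σ ^ 2 / 2)))
    (e : Ω → ℝ)
    (he : ∀ ω, e ω = Oacc +
      (1 / ((N : ℝ) - 1)) *
        ∑ i ∈ Finset.Icc 2 N,
          (((i : ℝ) - 1) * |μ + ΔT - μprev| + (η i ω - η 1 ω)) -
      S * (t + T₀ + ((N : ℝ) - 1) * (μ + ΔT) + (η N ω - η 1 ω))) :
    Measure.map e P =
      gaussianReal
        (Oacc + ((N : ℝ) / 2) * |μ + ΔT - μprev| -
          S * (t + T₀ + ((N : ℝ) - 1) * (μ + ΔT)))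
        (Real.toNNReal
          ((1 / 2) * (((N : ℝ) - 2 * S) / ((N : ℝ) - 1) + 2 * S ^ 2 - 2 * S) * σ ^ 2)) := by
  classical
  have hNR : (2 : ℝ) ≤ (N : ℝ) := by exact_mod_cast hN
  have hw : (0 : ℝ) < (N : ℝ) - 1 := by linarith
  have hw0 : ((N : ℝ) - 1) ≠ 0 := ne_of_gt hw
  set w : ℝ := (N : ℝ) - 1 with hw_def
  set u : ℝ := 1 / w with hu_def
  set A : ℝ := |μ + ΔT - μprev| with hA_def
  set B : ℝ := μ + ΔT with hB_def
  set K : ℝ := Oacc + ((N : ℝ) / 2) * A - S * (t + T₀ + w * B) with hK_def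
  set c : ℕ → ℝ := fun i =>
    u + (if i = 1 then S - 1 - u else 0) - (if i = N then S else 0) with hc_def
  set X : ℕ → Ω → ℝ := fun i ω => c i * η i ω with hX_def
  have hXm : ∀ i, Measurable (X i) := fun i => (hmeas i).const_mul (c i)
  have hXindep : iIndepFun X P :=
    hindep.comp (fun i x => c i * x) (fun i => measurable_const_mul (c i))
  have hXg : ∀ i, P.map (X i) =
      gaussianReal (c i * d) ((NNReal.mk ((c i) ^ 2) (sq_nonneg _)) * Real.toNNReal (σ ^ 2 / 2)) := by
    intro i
    have h1 : X i = (fun x => c i * x) ∘ η i := rfl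
    rw [h1, ← Measure.map_map (measurable_const_mul (c i)) (hmeas i), hgauss i,
      gaussianReal_map_const_mul]
  have key := map_sum_gaussian P X hXm hXindep _ _ hXg (Finset.Icc 1 N)
  -- Icc split
  have hsplit : Finset.Icc 1 N = insert 1 (Finset.Icc 2 N) := by
    rw [show (2 : ℕ) = 1 + 1 from rfl, Finset.Icc_add_one_left_eq_Ioc]
    exact (Finset.Ioc_insert_left (by omega : 1 ≤ N)).symm
  have h1notin : (1 : ℕ) ∉ Finset.Icc 2 N := by simp
  have hNmem : N ∈ Finset.Icc 2 N := Finset.mem_Icc.mpr ⟨hN, le_rfl⟩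
  have hN1 : N ≠ 1 := by omega
  have hcard2 : ((Finset.Icc 2 N).card : ℝ) = w := by
    rw [Nat.card_Icc]
    have : N + 1 - 2 = N - 1 := by omega
    rw [this, hw_def, Nat.cast_sub (by omega : 1 ≤ N), Nat.cast_one]
  have hcard1 : ((Finset.Icc 1 N).card : ℝ) = (N : ℝ) := by
    rw [Nat.card_Icc]
    have : N + 1 - 1 = N := by omega
    rw [this]
  -- pointwise identity for e
  have he' : e = fun ω => K + ∑ i ∈ Finset.Icc 1 N, X i ω := by
    funext ω
    have h1 : ∑ i ∈ Finset.Icc 2 N, (((i : ℝ) - 1) * A + (η i ω - η 1 ω))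
        = ((N : ℝ) * w / 2) * A + (∑ i ∈ Finset.Icc 2 N, η i ω) - w * η 1 ω := by
      rw [Finset.sum_add_distrib, Finset.sum_sub_distrib, ← Finset.sum_mul,
        sum_Icc_cast_helper, Finset.sum_const, nsmul_eq_mul, hcard2]
      rw [hw_def]
      ring
    have h2 : ∑ i ∈ Finset.Icc 1 N, X i ω
        = (S - 1) * η 1 ω + u * (∑ i ∈ Finset.Icc 2 N, η i ω) - S * η N ω := by
      rw [hsplit, Finset.sum_insert h1notin]
      have hc1 : c 1 = S - 1 := by
        show (u + if (1:ℕ) = 1 then S - 1 - u else 0) - (if (1:ℕ) = N then S else 0) = S - 1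
        rw [if_pos rfl, if_neg (Ne.symm hN1)]
        ring
      have hrest : ∀ i ∈ Finset.Icc 2 N,
          X i ω = u * η i ω - (if i = N then S * η i ω else 0) := by
        intro i hi
        have hi1 : i ≠ 1 := by
          have := (Finset.mem_Icc.mp hi).1; omega
        simp only [hX_def, hc_def, if_neg hi1]
        by_cases hiN : i = N
        · simp only [if_pos hiN]; ring
        · simp only [if_neg hiN]; ring
      rw [Finset.sum_congr rfl hrest, Finset.sum_sub_distrib, ← Finset.mul_sum,
        Finset.sum_ite_eq' (Finset.Icc 2 N) N (fun i => S * η i ω), if_pos hNmem]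
      simp only [hX_def, hc1]
      ring
    rw [he ω, h1, h2, hK_def]
    have huw : u * w = 1 := by
      rw [hu_def]; field_simp
    linear_combination ((N : ℝ) / 2 * A - η 1 ω) * huw
  -- sum of coefficients
  have hsum_c : ∑ i ∈ Finset.Icc 1 N, c i = 0 := by
    simp only [hc_def]
    rw [Finset.sum_sub_distrib, Finset.sum_add_distrib, Finset.sum_const, nsmul_eq_mul,
      hcard1, Finset.sum_ite_eq' (Finset.Icc 1 N) 1 (fun _ => S - 1 - u),
      Finset.sum_ite_eq' (Finset.Icc 1 N) N (fun _ => S),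
      if_pos (Finset.mem_Icc.mpr ⟨le_rfl, by omega⟩),
      if_pos (Finset.mem_Icc.mpr ⟨by omega, le_rfl⟩)]
    rw [hu_def, hw_def]
    have hw0' : (N:ℝ) - 1 ≠ 0 := hw0
    field_simp
    ring
  -- sum of squared coefficients
  have hsum_c2 : ∑ i ∈ Finset.Icc 1 N, (c i) ^ 2
      = ((N : ℝ) - 2 * S) / w + 2 * S ^ 2 - 2 * S := by
    have hpt : ∀ i ∈ Finset.Icc 1 N, (c i) ^ 2
        = u ^ 2 + (if i = 1 then (S - 1) ^ 2 - u ^ 2 else 0)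
            + (if i = N then (u - S) ^ 2 - u ^ 2 else 0) := by
      intro i _
      by_cases h1 : i = 1
      · have h2 : i ≠ N := by omega
        simp only [hc_def, if_pos h1, if_neg h2]
        ring
      · by_cases h2 : i = N
        · simp only [hc_def, if_neg h1, if_pos h2]
          ring
        · simp only [hc_def, if_neg h1, if_neg h2]
          ring
    rw [Finset.sum_congr rfl hpt]
    rw [Finset.sum_add_distrib, Finset.sum_add_distrib, Finset.sum_const, nsmul_eq_mul,
      hcard1, Finset.sum_ite_eq' (Finset.Icc 1 N) 1 (fun _ => (S - 1) ^ 2 - u ^ 2),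
      Finset.sum_ite_eq' (Finset.Icc 1 N) N (fun _ => (u - S) ^ 2 - u ^ 2),
      if_pos (Finset.mem_Icc.mpr ⟨le_rfl, by omega⟩),
      if_pos (Finset.mem_Icc.mpr ⟨by omega, le_rfl⟩)]
    rw [hu_def, hw_def]
    have hw0' : (N:ℝ) - 1 ≠ 0 := hw0
    field_simp
    ring
  -- assemble
  have hLm : Measurable (∑ i ∈ Finset.Icc 1 N, X i) := by
    have : (∑ i ∈ Finset.Icc 1 N, X i) = fun ω => ∑ i ∈ Finset.Icc 1 N, X i ω := by
      funext ω; simp [Finset.sum_apply]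
    rw [this]
    exact Finset.measurable_sum _ fun i _ => hXm i
  have he'' : e = (fun x => K + x) ∘ (∑ i ∈ Finset.Icc 1 N, X i) := by
    rw [he']
    funext ω
    simp [Finset.sum_apply]
  rw [he'', ← Measure.map_map (measurable_const_add K) hLm, key,
    gaussianReal_map_const_add]
  have hmean : (∑ i ∈ Finset.Icc 1 N, c i * d) + K = K := by
    rw [← Finset.sum_mul, hsum_c, zero_mul, zero_add]
  have hvar : (∑ i ∈ Finset.Icc 1 N,
        ((NNReal.mk ((c i) ^ 2) (sq_nonneg _)) * Real.toNNReal (σ ^ 2 / 2) : ℝ≥0))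
      = Real.toNNReal ((1 / 2) * (((N : ℝ) - 2 * S) / ((N : ℝ) - 1) + 2 * S ^ 2 - 2 * S) * σ ^ 2) := by
    have hcoe : ((∑ i ∈ Finset.Icc 1 N,
        ((NNReal.mk ((c i) ^ 2) (sq_nonneg _)) * Real.toNNReal (σ ^ 2 / 2) : ℝ≥0) : ℝ≥0) : ℝ)
        = (1 / 2) * (((N : ℝ) - 2 * S) / ((N : ℝ) - 1) + 2 * S ^ 2 - 2 * S) * σ ^ 2 := by
      push_cast
      rw [Real.coe_toNNReal _ (by positivity)]
      rw [← Finset.sum_mul]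
      rw [hsum_c2]
      rw [hw_def]
      ring
    rw [← hcoe, Real.toNNReal_coe]
  rw [hmean, hvar, hK_def, hA_def, hB_def, hw_def]
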